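/- The soft and hard risks satisfy the two-sided bound (1/2)·R*_p(H) ≤ R_p(𝐡) ≤ 1 − c_𝐡 + R*_p(H). -/

import Mathlib

open MeasureTheory

/-- **Theorem 7 (teo:hardsoft), main inequality**: the soft risk `R_p(hs)` and the hard risk
`R*_p(H)` satisfy `(1/2)·R*_p(H) ≤ R_p(hs) ≤ 1 − c_hs + R*_p(H)`, where `c_hs` is the expected
confidence of the decision. -/
theorem stmt_10 {𝒳 𝒴 : Type*} [MeasurableSpace 𝒳] [MeasurableSpace 𝒴]
    [Fintype 𝒴] [Nonempty 𝒴] [DiscreteMeasurableSpace 𝒴]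
    (p : Measure (𝒳 × 𝒴)) [IsProbabilityMeasure p]
    (hs : 𝒳 → 𝒴 → ℝ) (hmeas : ∀ y, Measurable fun x => hs x y)
    (hnn : ∀ x y, 0 ≤ hs x y) (hsum : ∀ x, ∑ y, hs x y = 1)
    (H : 𝒳 → 𝒴) (Hmeas : Measurable H) (Hmax : ∀ x y, hs x y ≤ hs x (H x)) :
    (1 / 2) * (p {z : 𝒳 × 𝒴 | H z.1 ≠ z.2}).toReal ≤ 1 - ∫ z, hs z.1 z.2 ∂p ∧
    1 - ∫ z, hs z.1 z.2 ∂p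
      ≤ 1 - (∫ z, hs z.1 (H z.1) ∂p) + (p {z : 𝒳 × 𝒴 | H z.1 ≠ z.2}).toReal := by
  classical
  set A : Set (𝒳 × 𝒴) := {z : 𝒳 × 𝒴 | H z.1 ≠ z.2} with hAdef
  have hle1 : ∀ x y, hs x y ≤ 1 := fun x y => by
    calc hs x y ≤ ∑ y', hs x y' :=
          Finset.single_le_sum (fun y' _ => hnn x y') (Finset.mem_univ y)
      _ = 1 := hsum x
  have hpair : ∀ x y, y ≠ H x → hs x y + hs x (H x) ≤ 1 := by
    intro x y hne
    have h : ∑ y' ∈ ({y, H x} : Finset 𝒴), hs x y' ≤ ∑ y', hs x y' :=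
      Finset.sum_le_sum_of_subset_of_nonneg (Finset.subset_univ _) (fun y' _ _ => hnn x y')
    rwa [Finset.sum_pair hne, hsum x] at h
  have hFmeas : Measurable (fun z : 𝒳 × 𝒴 => hs z.1 z.2) :=
    measurable_from_prod_countable_left fun y => hmeas y
  have hGmeas : Measurable (fun z : 𝒳 × 𝒴 => hs z.1 (H z.1)) := by
    have h1 : Measurable (fun x : 𝒳 => hs x (H x)) :=
      hFmeas.comp (measurable_id.prodMk Hmeas)
    exact h1.comp measurable_fst
  have hAmeas : MeasurableSet A := by
    have : MeasurableSet {z : 𝒳 × 𝒴 | H z.1 = z.2} := by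
      have hco : Measurable (fun z : 𝒳 × 𝒴 => (H z.1, z.2)) :=
        (Hmeas.comp measurable_fst).prodMk measurable_snd
      exact measurableSet_eq_fun (Hmeas.comp measurable_fst) measurable_snd
    exact this.compl
  have hFint : Integrable (fun z : 𝒳 × 𝒴 => hs z.1 z.2) p := by
    refine ⟨hFmeas.aestronglyMeasurable, HasFiniteIntegral.of_bounded (C := 1) ?_⟩
    filter_upwards with z
    rw [Real.norm_eq_abs, abs_of_nonneg (hnn _ _)]
    exact hle1 _ _
  have hGint : Integrable (fun z : 𝒳 × 𝒴 => hs z.1 (H z.1)) p := by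
    refine ⟨hGmeas.aestronglyMeasurable, HasFiniteIntegral.of_bounded (C := 1) ?_⟩
    filter_upwards with z
    rw [Real.norm_eq_abs, abs_of_nonneg (hnn _ _)]
    exact hle1 _ _
  have hIndInt : ∀ c : ℝ, Integrable (A.indicator (fun _ => c)) p :=
    fun c => (integrable_const c).indicator hAmeas
  constructor
  · -- lower bound
    have hmono : ∀ z : 𝒳 × 𝒴, A.indicator (fun _ => (1/2 : ℝ)) z ≤ 1 - hs z.1 z.2 := by
      intro z
      by_cases hz : z ∈ A
      · rw [Set.indicator_of_mem hz]
        have hne : z.2 ≠ H z.1 := fun h => hz (by simp [hAdef, h])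
        have := hpair z.1 z.2 hne
        have hle : hs z.1 z.2 ≤ 1 / 2 := by
          have := Hmax z.1 z.2
          linarith
        linarith
      · rw [Set.indicator_of_notMem hz]
        have := hle1 z.1 z.2
        linarith
    have hint : ∫ z, A.indicator (fun _ => (1/2 : ℝ)) z ∂p ≤ ∫ z, (1 - hs z.1 z.2) ∂p :=
      integral_mono (hIndInt _) ((integrable_const 1).sub hFint) hmono
    rw [integral_indicator_const _ hAmeas, integral_sub (integrable_const 1) hFint,
      integral_const] at hint
    simp only [measureReal_def, measure_univ, ENNReal.toReal_one, smul_eq_mul, one_mul, mul_one] at hint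
    calc (1/2 : ℝ) * (p A).toReal = (p A).toReal * (1/2 : ℝ) := by ring
      _ ≤ 1 - ∫ z, hs z.1 z.2 ∂p := hint
  · -- upper bound
    have hmono : ∀ z : 𝒳 × 𝒴,
        hs z.1 (H z.1) - hs z.1 z.2 ≤ A.indicator (fun _ => (1 : ℝ)) z := by
      intro z
      by_cases hz : z ∈ A
      · rw [Set.indicator_of_mem hz]
        have := hnn z.1 z.2
        have := hle1 z.1 (H z.1)
        linarith
      · rw [Set.indicator_of_notMem hz]
        have heq : H z.1 = z.2 := by
          by_contra h; exact hz h
        rw [heq]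
        linarith
    have hint : ∫ z, (hs z.1 (H z.1) - hs z.1 z.2) ∂p ≤ ∫ z, A.indicator (fun _ => (1:ℝ)) z ∂p :=
      integral_mono (hGint.sub hFint) (hIndInt _) hmono
    rw [integral_indicator_const _ hAmeas, integral_sub hGint hFint] at hint
    simp only [measureReal_def, smul_eq_mul, mul_one] at hint
    linarith
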